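/- Let H be a separable infinite-dimensional complex Hilbert space and T an invertible bounded linear operator on H. Suppose there exist a positive integer r, a nonzero complex number λ, and a constant C > 0 such that ‖T^{-n} + λ T^n‖ ≤ C·n^r for all integers n ≥ 1. Then there exists M > 0 such that ‖T^n (I − T²)‖ ≤ M·|n|^{r+2} for every nonzero integer n (where T^n for negative n denotes the corresponding power of T^{-1}). -/
import Mathlib


/-- Lemma 2.1.  Let `T` be an invertible operator on a separable infinite-dimensional
complex Hilbert space with `‖T^{-n} + λ T^n‖ ≤ C n^r` for all `n ≥ 1` (with `λ ≠ 0`,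
`r ≥ 1`, `C > 0`).  Then there is `M > 0` with `‖T^n (I - T²)‖ ≤ M |n|^{r+2}` for all
nonzero integers `n`. -/
theorem stmt10
    {H : Type*} [NormedAddCommGroup H] [InnerProductSpace ℂ H] [CompleteSpace H]
    [TopologicalSpace.SeparableSpace H] (hinf : ¬ FiniteDimensional ℂ H)
    (T : (H →L[ℂ] H)ˣ) (r : ℕ) (hr : 0 < r) (lam : ℂ) (hlam : lam ≠ 0)
    (C : ℝ) (hC : 0 < C)
    (hgrowth : ∀ n : ℕ, 1 ≤ n →
      ‖((T⁻¹ ^ n : (H →L[ℂ] H)ˣ) : H →L[ℂ] H)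
        + lam • ((T ^ n : (H →L[ℂ] H)ˣ) : H →L[ℂ] H)‖ ≤ C * (n : ℝ) ^ r) :
    ∃ M : ℝ, 0 < M ∧ ∀ n : ℤ, n ≠ 0 →
      ‖((T ^ n : (H →L[ℂ] H)ˣ) : H →L[ℂ] H) * (1 - ((T : H →L[ℂ] H)) ^ 2)‖
        ≤ M * |(n : ℝ)| ^ (r + 2) := by
  set S : H →L[ℂ] H := (T : H →L[ℂ] H) with hS
  set Si : H →L[ℂ] H := ((T⁻¹ : (H →L[ℂ] H)ˣ) : H →L[ℂ] H) with hSidef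
  have hSiS : Si * S = 1 := by
    simp only [hSidef, hS]; exact T.inv_mul
  -- growth in terms of S, Si
  have hA : ∀ n : ℕ, 1 ≤ n → ‖Si ^ n + lam • S ^ n‖ ≤ C * (n : ℝ) ^ r := by
    intro n hn
    have := hgrowth n hn
    simpa [Units.val_pow_eq_pow_val, hS, hSidef] using this
  set D : ℝ := ‖Si‖ with hD
  set E : ℝ := ‖(1 : H →L[ℂ] H) - S ^ 2‖ with hE
  have hlamn : (0:ℝ) < ‖lam‖ := norm_pos_iff.mpr hlam
  -- key algebraic identity
  have key : ∀ m : ℕ, lam • (S ^ m * (1 - S ^ 2)) =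
      Si * (Si ^ (m+1) + lam • S ^ (m+1)) - (Si ^ (m+2) + lam • S ^ (m+2)) := by
    intro m
    have h1 : Si * S ^ (m+1) = S ^ m := by
      rw [pow_succ', ← mul_assoc, hSiS, one_mul]
    have h2 : Si * Si ^ (m+1) = Si ^ (m+2) := by
      rw [← pow_succ']
    rw [mul_add, mul_smul_comm, h1, h2]
    have h3 : S ^ m * (1 - S ^ 2) = S ^ m - S ^ (m+2) := by
      rw [mul_sub, mul_one, ← pow_add]
    rw [h3, smul_sub]
    abel
  -- positive-power bound
  have hpos : ∀ m : ℕ, 1 ≤ m →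
      ‖S ^ m * (1 - S ^ 2)‖ ≤ ((D + 1) * C * 3 ^ r / ‖lam‖) * (m : ℝ) ^ r := by
    intro m hm
    have hb : ‖lam‖ * ‖S ^ m * (1 - S ^ 2)‖ ≤ (D + 1) * C * 3 ^ r * (m : ℝ) ^ r := by
      have h1 : ‖lam • (S ^ m * (1 - S ^ 2))‖ ≤
          D * (C * ((m+1 : ℕ) : ℝ) ^ r) + C * ((m+2 : ℕ) : ℝ) ^ r := by
        rw [key m]
        refine (norm_sub_le _ _).trans ?_
        gcongr
        · exact (norm_mul_le _ _).trans (by gcongr; exact hA (m+1) (by omega))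
        · exact hA (m+2) (by omega)
      rw [norm_smul] at h1
      refine h1.trans ?_
      have hm1 : ((m+1 : ℕ) : ℝ) ^ r ≤ 3 ^ r * (m : ℝ) ^ r := by
        rw [← mul_pow]
        gcongr
        push_cast
        have : (1:ℝ) ≤ (m:ℝ) := by exact_mod_cast hm
        linarith
      have hm2 : ((m+2 : ℕ) : ℝ) ^ r ≤ 3 ^ r * (m : ℝ) ^ r := by
        rw [← mul_pow]
        gcongr
        push_cast
        have : (1:ℝ) ≤ (m:ℝ) := by exact_mod_cast hm
        linarith
      have hD0 : 0 ≤ D := norm_nonneg _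
      nlinarith [hC.le, pow_nonneg (by norm_num : (0:ℝ) ≤ 3) r,
        mul_le_mul_of_nonneg_left hm1 (mul_nonneg hD0 hC.le),
        mul_le_mul_of_nonneg_left hm2 hC.le]
    calc ‖S ^ m * (1 - S ^ 2)‖ ≤ (D + 1) * C * 3 ^ r * (m : ℝ) ^ r / ‖lam‖ :=
          (le_div_iff₀' hlamn).mpr hb
      _ = ((D + 1) * C * 3 ^ r / ‖lam‖) * (m : ℝ) ^ r := by ring
  set K₁ : ℝ := (D + 1) * C * 3 ^ r / ‖lam‖ with hK₁
  have hK₁0 : 0 ≤ K₁ := by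
    apply div_nonneg _ hlamn.le
    positivity
  -- negative-power bound
  have hneg : ∀ m : ℕ, 1 ≤ m →
      ‖Si ^ m * (1 - S ^ 2)‖ ≤ (C * E + ‖lam‖ * K₁) * (m : ℝ) ^ r := by
    intro m hm
    have hid : Si ^ m * (1 - S ^ 2) =
        (Si ^ m + lam • S ^ m) * (1 - S ^ 2) - lam • (S ^ m * (1 - S ^ 2)) := by
      rw [add_mul, smul_mul_assoc]; abel
    rw [hid]
    refine (norm_sub_le _ _).trans ?_
    have h1 : ‖(Si ^ m + lam • S ^ m) * (1 - S ^ 2)‖ ≤ (C * (m:ℝ) ^ r) * E := by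
      refine (norm_mul_le _ _).trans ?_
      gcongr
      exact hA m hm
    have h2 : ‖lam • (S ^ m * (1 - S ^ 2))‖ ≤ ‖lam‖ * (K₁ * (m:ℝ) ^ r) := by
      rw [norm_smul]
      gcongr
      exact hpos m hm
    calc _ ≤ (C * (m:ℝ) ^ r) * E + ‖lam‖ * (K₁ * (m:ℝ) ^ r) := by gcongr
      _ = (C * E + ‖lam‖ * K₁) * (m : ℝ) ^ r := by ring
  set K₂ : ℝ := C * E + ‖lam‖ * K₁ with hK₂
  have hK₂0 : 0 ≤ K₂ := by
    have : 0 ≤ E := norm_nonneg _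
    positivity
  refine ⟨K₁ + K₂ + 1, by positivity, ?_⟩
  intro n hn
  have hMK₁ : K₁ ≤ K₁ + K₂ + 1 := by linarith
  have hMK₂ : K₂ ≤ K₁ + K₂ + 1 := by linarith
  rcases lt_or_gt_of_ne hn with hneg' | hpos'
  · -- n < 0
    set m : ℕ := (-n).toNat with hm
    have hm1 : 1 ≤ m := by omega
    have hnm : n = -(m : ℤ) := by omega
    have hTn : ((T ^ n : (H →L[ℂ] H)ˣ) : H →L[ℂ] H) = Si ^ m := by
      rw [hnm, zpow_neg, zpow_natCast, ← inv_pow, Units.val_pow_eq_pow_val]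
    rw [hTn]
    have habs : |(n : ℝ)| = (m : ℝ) := by
      rw [hnm]; push_cast; rw [abs_neg, abs_of_nonneg (by positivity)]
    rw [habs]
    calc ‖Si ^ m * (1 - S ^ 2)‖ ≤ K₂ * (m : ℝ) ^ r := hneg m hm1
      _ ≤ (K₁ + K₂ + 1) * (m : ℝ) ^ (r + 2) := by
          have h1 : (1:ℝ) ≤ (m:ℝ) := by exact_mod_cast hm1
          have : (m:ℝ) ^ r ≤ (m:ℝ) ^ (r+2) := pow_le_pow_right₀ h1 (by omega)
          nlinarith [pow_nonneg (by linarith : (0:ℝ) ≤ (m:ℝ)) r]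
  · -- n > 0
    set m : ℕ := n.toNat with hm
    have hm1 : 1 ≤ m := by omega
    have hnm : n = (m : ℤ) := by omega
    have hTn : ((T ^ n : (H →L[ℂ] H)ˣ) : H →L[ℂ] H) = S ^ m := by
      rw [hnm, zpow_natCast, Units.val_pow_eq_pow_val]
    rw [hTn]
    have habs : |(n : ℝ)| = (m : ℝ) := by
      rw [hnm]; push_cast; rw [abs_of_nonneg (by positivity)]
    rw [habs]
    calc ‖S ^ m * (1 - S ^ 2)‖ ≤ K₁ * (m : ℝ) ^ r := hpos m hm1
      _ ≤ (K₁ + K₂ + 1) * (m : ℝ) ^ (r + 2) := by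
          have h1 : (1:ℝ) ≤ (m:ℝ) := by exact_mod_cast hm1
          have : (m:ℝ) ^ r ≤ (m:ℝ) ^ (r+2) := pow_le_pow_right₀ h1 (by omega)
          nlinarith [pow_nonneg (by linarith : (0:ℝ) ≤ (m:ℝ)) r]
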